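/- Let n ≥ 2 and let S = (x_1,…,x_k) be a sequence in Z_n. Then S is a U(n)-weighted zero-sum sequence if and only if for every prime divisor p of n, the sequence S^{(p)} = (f_p(x_1),…,f_p(x_k)) is a U(p^{v_p(n)})-weighted zero-sum sequence in Z_{p^{v_p(n)}}, where v_p(n) is the exponent of p in n and f_p : Z_n → Z_{p^{v_p(n)}} is the natural reduction map. -/

import Mathlib

open Classical in
/-- The number of terms of the sequence `S` satisfying the predicate `P`. -/
noncomputable def pcount {α : Type*} (P : α → Prop) (S : List α) : ℕ :=
  S.countP fun x => decide (P x)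

/-- `S` is an `A`-weighted zero-sum sequence in `ZMod n`: there are weights
`a i ∈ A` with `∑ a i * x i = 0`. -/
def IsWZSum {n : ℕ} (A : Set (ZMod n)) (S : List (ZMod n)) : Prop :=
  ∃ w : List (ZMod n), w.length = S.length ∧ (∀ a ∈ w, a ∈ A) ∧
    (List.zipWith (· * ·) w S).sum = 0

/-- `S` has an `A`-weighted zero-sum subsequence of length `t ≥ 1`. -/
def HasWZSS {n : ℕ} (A : Set (ZMod n)) (S : List (ZMod n)) (t : ℕ) : Prop :=
  0 < t ∧ ∃ T : List (ZMod n), T.Sublist S ∧ T.length = t ∧ IsWZSum A T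

/-- `S` has a nonempty `A`-weighted zero-sum subsequence. -/
def HasWZS {n : ℕ} (A : Set (ZMod n)) (S : List (ZMod n)) : Prop :=
  ∃ T : List (ZMod n), T.Sublist S ∧ T ≠ [] ∧ IsWZSum A T

/-- The `A`-weighted Davenport constant `D_A(n)`: the least `k > 0` such that every
sequence of length `k` in `ZMod n` has a nonempty `A`-weighted zero-sum subsequence. -/
noncomputable def DavC (n : ℕ) (A : Set (ZMod n)) : ℕ :=
  sInf {k | 0 < k ∧ ∀ S : List (ZMod n), S.length = k → HasWZS A S}

/-- The `A`-weighted Gao constant `E_A(n)`: the least `k > 0` such that every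
sequence of length `k` in `ZMod n` has an `A`-weighted zero-sum subsequence of length `n`. -/
noncomputable def GaoC (n : ℕ) (A : Set (ZMod n)) : ℕ :=
  sInf {k | 0 < k ∧ ∀ S : List (ZMod n), S.length = k → HasWZSS A S n}

/-- The set of units of `ZMod n`. -/
def U (n : ℕ) : Set (ZMod n) := {x | IsUnit x}

/-- An `A`-extremal sequence for the Gao constant: a sequence of length `E_A(n) - 1`
with no `A`-weighted zero-sum subsequence of length `n`. -/
def IsGaoExtremal (n : ℕ) (A : Set (ZMod n)) (S : List (ZMod n)) : Prop :=
  S.length = GaoC n A - 1 ∧ ¬ HasWZSS A S n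

/-- `S` and `T` are `A`-equivalent: there are a unit `c`, weights `a i ∈ A` and a
permutation matching the multiset of terms `c * y j` with the multiset `a i * x i`. -/
def AEquiv {n : ℕ} (A : Set (ZMod n)) (S T : List (ZMod n)) : Prop :=
  ∃ c : ZMod n, IsUnit c ∧ ∃ w : List (ZMod n), w.length = S.length ∧
    (∀ a ∈ w, a ∈ A) ∧ (T.map fun y => c * y).Perm (List.zipWith (· * ·) w S)


lemma zipWith_eq_ofFn {R : Type*} [Mul R] (w S : List R) (hlen : w.length = S.length) :
    List.zipWith (· * ·) w S
      = List.ofFn (fun i : Fin S.length => w[(i : ℕ)]'(by omega) * S[(i : ℕ)]) := by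
  apply List.ext_getElem (by simp [hlen]) (fun i h1 h2 => by simp)

lemma isWZSum_iff_fun {n : ℕ} (A : Set (ZMod n)) (S : List (ZMod n)) :
    IsWZSum A S ↔ ∃ w : Fin S.length → ZMod n, (∀ i, w i ∈ A) ∧
      ∑ i : Fin S.length, w i * S[(i : ℕ)] = 0 := by
  constructor
  · rintro ⟨w, hlen, hA, hsum⟩
    refine ⟨fun i => w[(i : ℕ)]'(by omega), fun i => hA _ (List.getElem_mem _), ?_⟩
    rwa [zipWith_eq_ofFn w S hlen, List.sum_ofFn] at hsum
  · rintro ⟨w, hA, hsum⟩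
    refine ⟨List.ofFn w, by simp, ?_, ?_⟩
    · intro a ha
      obtain ⟨i, rfl⟩ := List.mem_ofFn.mp ha
      exact hA i
    · rw [zipWith_eq_ofFn _ _ (by simp), List.sum_ofFn]
      simpa using hsum

lemma pi_isUnit {ι : Type*} {M : ι → Type*} [∀ i, Monoid (M i)] {f : ∀ i, M i}
    (h : ∀ i, IsUnit (f i)) : IsUnit f :=
  ⟨⟨f, fun i => (((h i).unit⁻¹ : (M i)ˣ) : M i), by funext i; simp, by funext i; simp⟩, rfl⟩

noncomputable def crtEquiv (n : ℕ) (hn : n ≠ 0) :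
    ZMod n ≃+* Π p : n.primeFactors, ZMod ((p : ℕ) ^ n.factorization p) :=
  (ZMod.ringEquivCongr (show n = ∏ p : n.primeFactors, (p : ℕ) ^ n.factorization p by
    rw [Finset.prod_coe_sort _ (fun p => p ^ n.factorization p)]
    have h := Nat.factorization_prod_pow_eq_self hn
    rw [Finsupp.prod, Nat.support_factorization] at h
    exact h.symm)).trans
  (ZMod.prodEquivPi _ (fun i j hij =>
    (((Nat.coprime_primes (Nat.prime_of_mem_primeFactors i.2)
      (Nat.prime_of_mem_primeFactors j.2)).mpr (Subtype.coe_ne_coe.mpr hij))).pow _ _))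

lemma crtEquiv_apply {n : ℕ} (hn : n ≠ 0) (x : ZMod n) (p : n.primeFactors) :
    crtEquiv n hn x p = ZMod.castHom (Nat.ordProj_dvd n p) (ZMod ((p : ℕ) ^ n.factorization p)) x :=
  DFunLike.congr_fun
    (RingHom.ext_zmod ((Pi.evalRingHom _ p).comp (crtEquiv n hn).toRingHom)
      (ZMod.castHom (Nat.ordProj_dvd n p) _)) x



/-- A sequence in `ZMod n` is a `U(n)`-weighted zero-sum sequence iff for every prime
divisor `p` of `n`, its image in `ZMod (p ^ (v_p n))` is a `U(p ^ (v_p n))`-weighted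
zero-sum sequence. -/
theorem wzsum_iff_forall_prime (n : ℕ) (hn : 2 ≤ n) (S : List (ZMod n)) :
    IsWZSum (U n) S ↔
      ∀ p : ℕ, p.Prime → p ∣ n →
        IsWZSum (U (p ^ (n.factorization p)))
          (S.map (ZMod.castHom (Nat.ordProj_dvd n p) (ZMod (p ^ (n.factorization p))))) := by
  have hn0 : n ≠ 0 := by omega
  constructor
  · rintro ⟨w, hlen, hU, hsum⟩ p hp hpn
    set f := ZMod.castHom (Nat.ordProj_dvd n p) (ZMod (p ^ n.factorization p)) with hf
    refine ⟨w.map f, by simp [hlen], ?_, ?_⟩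
    · intro a ha
      obtain ⟨b, hb, rfl⟩ := List.mem_map.mp ha
      exact (hU b hb).map f
    · have hz : List.zipWith (· * ·) (w.map f) (S.map f)
          = (List.zipWith (· * ·) w S).map f := by
        apply List.ext_getElem (by simp) (fun i h1 h2 => by simp)
      rw [hz, ← map_list_sum f, hsum, map_zero]
  · intro h
    rw [isWZSum_iff_fun]
    have key : ∀ p : n.primeFactors, ∃ g : Fin S.length → ZMod ((p : ℕ) ^ n.factorization p),
        (∀ i, IsUnit (g i)) ∧
        ∑ i : Fin S.length,
          g i * ZMod.castHom (Nat.ordProj_dvd n p) (ZMod ((p : ℕ) ^ n.factorization p))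
            S[(i : ℕ)] = 0 := by
      intro p
      have hp := Nat.prime_of_mem_primeFactors p.2
      obtain ⟨g, hg1, hg2⟩ := (isWZSum_iff_fun _ _).mp
        (h p hp (Nat.dvd_of_mem_primeFactors p.2))
      refine ⟨fun i => g (Fin.cast (by simp) i), fun i => hg1 _, ?_⟩
      rw [← hg2]
      rw [← (finCongr (by simp : (S.map _).length = S.length)).sum_comp]
      apply Finset.sum_congr rfl
      intro i _
      congr 1
      simp
    choose g hgU hgsum using key
    refine ⟨fun i => (crtEquiv n hn0).symm (fun p => g p i), fun i => ?_, ?_⟩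
    · show IsUnit _
      exact (pi_isUnit (fun p => hgU p i)).map (crtEquiv n hn0).symm
    · apply (crtEquiv n hn0).injective
      rw [map_zero, map_sum]
      funext p
      rw [Finset.sum_apply]
      rw [show ∀ q, (0 : Π p : n.primeFactors, ZMod ((p : ℕ) ^ n.factorization p)) q = 0
        from fun q => rfl]
      rw [← hgsum p]
      apply Finset.sum_congr rfl
      intro i _
      rw [map_mul, Pi.mul_apply, RingEquiv.apply_symm_apply, crtEquiv_apply]
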